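/- (Sharpness of the order Υ in the L²-estimate of Lemma 2: the shifted-disc example of Remark 4, claim ‖u−u_r‖_Ω = √π·Υ + O(Υ³).) There exists a constant C > 0 such that for all Υ ∈ (0,1): | ∫_Ω (u(x) − u_r(x))² dx − πΥ² | ≤ C·Υ³. -/

import Mathlib

open MeasureTheory Set Real

/-- A point of the Euclidean plane given by its two coordinates. -/
noncomputable def pt2 (a b : ℝ) : EuclideanSpace ℝ (Fin 2) :=
  (WithLp.equiv 2 (Fin 2 → ℝ)).symm ![a, b]

/-- Centre `(Υ, 0)` of the shifted disc. -/
noncomputable def ctr (Υ : ℝ) : EuclideanSpace ℝ (Fin 2) := pt2 Υ 0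

/-- The solution `u(x) = 1 − ‖x‖²` on the unit disc, extended by zero. -/
noncomputable def uSol (x : EuclideanSpace ℝ (Fin 2)) : ℝ :=
  if ‖x‖ < 1 then 1 - ‖x‖^2 else 0

/-- The solution `u_r(x) = 1 − ‖x − (Υ,0)‖²` on the shifted disc, extended by zero. -/
noncomputable def urSol (Υ : ℝ) (x : EuclideanSpace ℝ (Fin 2)) : ℝ :=
  if ‖x - ctr Υ‖ < 1 then 1 - ‖x - ctr Υ‖^2 else 0

section Aux

local notation "E2" => EuclideanSpace ℝ (Fin 2)

lemma SDL2.norm_sq_eq (x : E2) : ‖x‖^2 = (x 0)^2 + (x 1)^2 := by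
  rw [EuclideanSpace.norm_eq, Real.sq_sqrt (by positivity)]
  simp [Fin.sum_univ_two, sq_abs]

lemma SDL2.abs_apply_le (x : E2) (i : Fin 2) : |x i| ≤ ‖x‖ := by
  have h : (x i)^2 ≤ ‖x‖^2 := by
    rw [SDL2.norm_sq_eq]
    fin_cases i <;> simp <;> nlinarith [sq_nonneg (x 0), sq_nonneg (x 1)]
  calc |x i| = Real.sqrt ((x i)^2) := (Real.sqrt_sq_eq_abs _).symm
  _ ≤ Real.sqrt (‖x‖^2) := Real.sqrt_le_sqrt h
  _ = ‖x‖ := Real.sqrt_sq (norm_nonneg _)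

lemma SDL2.vol_ball2 (x : E2) (r : ℝ) (hr : 0 ≤ r) :
    volume (Metric.ball x r) = ENNReal.ofReal (π * r^2) := by
  rw [EuclideanSpace.volume_ball]
  simp only [Fintype.card_fin]
  rw [show ((2:ℕ):ℝ)/2 + 1 = 2 by norm_num, Real.Gamma_two]
  rw [Real.sq_sqrt pi_nonneg, ← ENNReal.ofReal_pow hr, ← ENNReal.ofReal_mul (by positivity)]
  ring_nf

lemma SDL2.vol_ball2_toReal :
    (volume (Metric.ball (0:E2) 1)).toReal = π := by
  rw [SDL2.vol_ball2 0 1 zero_le_one, ENNReal.toReal_ofReal (by positivity)]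
  norm_num

lemma SDL2.integrableOn_ball {f : E2 → ℝ} (hf : Measurable f) (C : ℝ)
    (hC : ∀ x ∈ Metric.ball (0:E2) 1, |f x| ≤ C) :
    IntegrableOn f (Metric.ball (0:E2) 1) := by
  apply Measure.integrableOn_of_bounded (M := C) (measure_ball_lt_top).ne
    hf.aestronglyMeasurable
  exact (ae_restrict_iff' measurableSet_ball).2 (ae_of_all _ fun x hx => hC x hx)

lemma SDL2.integral_x0 : ∫ x : E2 in Metric.ball 0 1, x 0 = 0 := by
  rw [← integral_indicator measurableSet_ball]
  set F := (Metric.ball (0:E2) 1).indicator (fun x => x 0) with hF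
  have hneg : ∀ x, F (-x) = - F x := by
    intro x
    by_cases h : x ∈ Metric.ball (0:E2) 1
    · have h' : -x ∈ Metric.ball (0:E2) 1 := by
        simpa [mem_ball_zero_iff] using h
      simp [hF, indicator_of_mem h, indicator_of_mem h']
    · have h' : -x ∉ Metric.ball (0:E2) 1 := by
        simpa [mem_ball_zero_iff] using h
      simp [hF, indicator_of_notMem h, indicator_of_notMem h']
  have h1 : ∫ x, F (-x) = ∫ x, F x := integral_neg_eq_self F volume
  have h2 : ∫ x, F (-x) = - ∫ x, F x := by
    simp_rw [hneg]; exact integral_neg F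
  linarith

lemma SDL2.integral_normsq : ∫ x : E2 in Metric.ball 0 1, ‖x‖^2 = π/2 := by
  rw [← integral_indicator measurableSet_ball]
  have hident : ∀ x : E2, (Metric.ball (0:E2) 1).indicator (fun x => ‖x‖^2) x
      = (fun y : ℝ => if y < 1 then y^2 else 0) ‖x‖ := by
    intro x
    by_cases h : x ∈ Metric.ball (0:E2) 1
    · have : ‖x‖ < 1 := by simpa [mem_ball_zero_iff] using h
      simp [indicator_of_mem h, this]
    · have : ¬ ‖x‖ < 1 := by simpa [mem_ball_zero_iff] using h
      simp [indicator_of_notMem h, this]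
  simp_rw [hident]
  rw [MeasureTheory.integral_fun_norm_addHaar volume (fun y : ℝ => if y < 1 then y^2 else 0)]
  have hdim : Module.finrank ℝ E2 = 2 := finrank_euclideanSpace_fin
  rw [hdim, measureReal_def, SDL2.vol_ball2 0 1 zero_le_one]
  have h1 : ∫ y in Ioi (0:ℝ), y ^ (2-1) • (if y < 1 then y^2 else 0) = 1/4 := by
    have : ∀ y ∈ Ioi (0:ℝ), y ^ (2-1) • (if y < 1 then y^2 else 0)
        = (Ioo (0:ℝ) 1).indicator (fun y => y^3) y := by
      intro y hy
      simp only [mem_Ioi] at hy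
      by_cases h : y < 1
      · rw [if_pos h, indicator_of_mem (by exact ⟨hy, h⟩)]
        simp; ring
      · rw [if_neg h, indicator_of_notMem (by simp [mem_Ioo]; intro _; linarith)]
        simp
    rw [setIntegral_congr_fun measurableSet_Ioi this,
      setIntegral_indicator measurableSet_Ioo]
    have : Ioi (0:ℝ) ∩ Ioo 0 1 = Ioo 0 1 := by
      ext y
      simp only [mem_inter_iff, mem_Ioi, mem_Ioo]
      tauto
    rw [this, ← integral_Ioc_eq_integral_Ioo, ← intervalIntegral.integral_of_le zero_le_one]
    simp [integral_pow]
    norm_num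
  rw [h1]
  rw [ENNReal.toReal_ofReal (by positivity)]
  simp [mul_one]
  ring

/-- The coordinate-swap isometry of the plane. -/
noncomputable def SDL2.swp : E2 ≃ₗᵢ[ℝ] E2 :=
  LinearIsometryEquiv.piLpCongrLeft 2 ℝ ℝ (Equiv.swap (0:Fin 2) 1)

lemma SDL2.swp_apply0 (x : E2) : SDL2.swp x 0 = x 1 := by
  simp only [SDL2.swp, LinearIsometryEquiv.piLpCongrLeft_apply, Equiv.piCongrLeft'_apply,
    Equiv.symm_swap]
  rw [Equiv.swap_apply_left]

lemma SDL2.integral_x0_sq_eq : (∫ x : E2 in Metric.ball 0 1, (x 0)^2)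
    = ∫ x : E2 in Metric.ball 0 1, (x 1)^2 := by
  rw [← integral_indicator measurableSet_ball, ← integral_indicator measurableSet_ball]
  have := SDL2.swp.measurePreserving.integral_comp' (f := SDL2.swp.toMeasurableEquiv)
    ((Metric.ball (0:E2) 1).indicator (fun x => (x 0)^2))
  simp only [LinearIsometryEquiv.coe_toMeasurableEquiv] at this
  rw [← this]
  congr 1
  ext x
  have hmem : (SDL2.swp x ∈ Metric.ball (0:E2) 1) ↔ x ∈ Metric.ball (0:E2) 1 := by
    simp [mem_ball_zero_iff, SDL2.swp.norm_map]
  by_cases h : x ∈ Metric.ball (0:E2) 1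
  · rw [indicator_of_mem h, indicator_of_mem (hmem.mpr h)]
    simp [SDL2.swp_apply0]
  · rw [indicator_of_notMem h, indicator_of_notMem (fun hc => h (hmem.mp hc))]

lemma SDL2.integrableOn_x0sq :
    IntegrableOn (fun x : E2 => (x 0)^2) (Metric.ball (0:E2) 1) := by
  apply SDL2.integrableOn_ball (f := fun x : E2 => (x 0)^2) (((measurable_pi_apply 0).comp (WithLp.measurable_ofLp 2 _)).pow_const 2) 1
  intro x hx
  have h0 := SDL2.abs_apply_le x 0
  have hx1 : ‖x‖ < 1 := by simpa [mem_ball_zero_iff] using hx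
  have : |x 0| ≤ 1 := h0.trans hx1.le
  rw [abs_le] at this ⊢
  constructor <;> nlinarith [this.1, this.2]

lemma SDL2.integrableOn_x1sq :
    IntegrableOn (fun x : E2 => (x 1)^2) (Metric.ball (0:E2) 1) := by
  apply SDL2.integrableOn_ball (f := fun x : E2 => (x 1)^2) (((measurable_pi_apply 1).comp (WithLp.measurable_ofLp 2 _)).pow_const 2) 1
  intro x hx
  have h0 := SDL2.abs_apply_le x 1
  have hx1 : ‖x‖ < 1 := by simpa [mem_ball_zero_iff] using hx
  have : |x 1| ≤ 1 := h0.trans hx1.le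
  rw [abs_le] at this ⊢
  constructor <;> nlinarith [this.1, this.2]

lemma SDL2.integrableOn_x0 :
    IntegrableOn (fun x : E2 => x 0) (Metric.ball (0:E2) 1) := by
  apply SDL2.integrableOn_ball ((measurable_pi_apply 0).comp (WithLp.measurable_ofLp 2 _)) 1
  intro x hx
  have hx1 : ‖x‖ < 1 := by simpa [mem_ball_zero_iff] using hx
  exact (SDL2.abs_apply_le x 0).trans hx1.le

lemma SDL2.integral_x0sq : ∫ x : E2 in Metric.ball 0 1, (x 0)^2 = π/4 := by
  have hsum : (∫ x : E2 in Metric.ball 0 1, (x 0)^2)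
      + (∫ x : E2 in Metric.ball 0 1, (x 1)^2) = π/2 := by
    rw [← integral_add SDL2.integrableOn_x0sq SDL2.integrableOn_x1sq]
    rw [← SDL2.integral_normsq]
    exact setIntegral_congr_fun measurableSet_ball fun x _ => (SDL2.norm_sq_eq x).symm
  have hswap := SDL2.integral_x0_sq_eq
  linarith

lemma SDL2.integral_main (Υ : ℝ) :
    ∫ x : E2 in Metric.ball 0 1, (Υ^2 - 2*Υ*(x 0))^2 = π*Υ^2 + π*Υ^4 := by
  have e : ∀ x : E2, (Υ^2 - 2*Υ*(x 0))^2
      = Υ^4 + ((-(4*Υ^3))*(x 0) + (4*Υ^2)*((x 0)^2)) := fun x => by ring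
  rw [setIntegral_congr_fun measurableSet_ball fun x _ => e x]
  have hc : IntegrableOn (fun _ : E2 => Υ^4) (Metric.ball (0:E2) 1) :=
    integrableOn_const (measure_ball_lt_top).ne
  have hf1 : IntegrableOn (fun x : E2 => (-(4*Υ^3))*(x 0)) (Metric.ball (0:E2) 1) :=
    SDL2.integrableOn_x0.const_mul _
  have hf2 : IntegrableOn (fun x : E2 => (4*Υ^2)*((x 0)^2)) (Metric.ball (0:E2) 1) :=
    SDL2.integrableOn_x0sq.const_mul _
  have hf12 : IntegrableOn
      (fun x : E2 => (-(4*Υ^3))*(x 0) + (4*Υ^2)*((x 0)^2)) (Metric.ball (0:E2) 1) :=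
    hf1.add hf2
  rw [integral_add hc hf12, integral_add hf1 hf2,
    integral_const_mul, integral_const_mul, setIntegral_const, measureReal_def,
    SDL2.integral_x0, SDL2.integral_x0sq, SDL2.vol_ball2_toReal]
  simp only [smul_eq_mul]
  ring

lemma SDL2.ctr_apply0 (Υ : ℝ) : ctr Υ 0 = Υ := rfl
lemma SDL2.ctr_apply1 (Υ : ℝ) : ctr Υ 1 = 0 := rfl

lemma SDL2.norm_ctr (Υ : ℝ) (hΥ : 0 ≤ Υ) : ‖ctr Υ‖ = Υ := by
  have h := SDL2.norm_sq_eq (ctr Υ)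
  rw [SDL2.ctr_apply0, SDL2.ctr_apply1] at h
  have : ‖ctr Υ‖ = Real.sqrt (‖ctr Υ‖^2) := (Real.sqrt_sq (norm_nonneg _)).symm
  rw [this, h]
  simpa using Real.sqrt_sq hΥ

lemma SDL2.norm_sub_ctr_sq (Υ : ℝ) (x : E2) :
    ‖x - ctr Υ‖^2 = ‖x‖^2 - 2*Υ*(x 0) + Υ^2 := by
  have h0 : (x - ctr Υ) 0 = x 0 - Υ := rfl
  have h1 : (x - ctr Υ) 1 = x 1 - 0 := rfl
  rw [SDL2.norm_sq_eq (x - ctr Υ), SDL2.norm_sq_eq x, h0, h1]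
  ring

lemma SDL2.lune_vol (Υ : ℝ) (hΥ : Υ ∈ Ioo (0:ℝ) 1) :
    (volume (Metric.ball (0:E2) 1 \ Metric.ball (ctr Υ) 1)).toReal ≤ π * Υ := by
  obtain ⟨h0, h1⟩ := hΥ
  set c := ctr Υ
  set c' : E2 := (2⁻¹:ℝ) • c with hc'def
  have hnc : ‖c‖ = Υ := SDL2.norm_ctr Υ h0.le
  have hnc' : ‖c'‖ = Υ/2 := by
    rw [hc'def, norm_smul, hnc]
    simp [abs_of_nonneg]; ring
  have hncc : ‖c' - c‖ = Υ/2 := by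
    have : c' - c = (2⁻¹ - 1 : ℝ) • c := by
      rw [hc'def, sub_smul, one_smul]
    rw [this, norm_smul, hnc]
    rw [Real.norm_eq_abs, show |(2⁻¹ - 1 : ℝ)| = 2⁻¹ by norm_num]
    ring
  have hr : (0:ℝ) ≤ 1 - Υ/2 := by linarith
  have hsub : Metric.ball c' (1 - Υ/2) ⊆ Metric.ball (0:E2) 1 ∩ Metric.ball c 1 := by
    intro x hx
    rw [Metric.mem_ball, dist_eq_norm] at hx
    constructor
    · rw [mem_ball_zero_iff]
      calc ‖x‖ = ‖(x - c') + c'‖ := by congr 1; abel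
      _ ≤ ‖x - c'‖ + ‖c'‖ := norm_add_le _ _
      _ < (1 - Υ/2) + Υ/2 := by rw [hnc']; linarith
      _ = 1 := by ring
    · rw [Metric.mem_ball, dist_eq_norm]
      calc ‖x - c‖ = ‖(x - c') + (c' - c)‖ := by congr 1; abel
      _ ≤ ‖x - c'‖ + ‖c' - c‖ := norm_add_le _ _
      _ < (1 - Υ/2) + Υ/2 := by rw [hncc]; linarith
      _ = 1 := by ring
  have hmono : Metric.ball (0:E2) 1 \ Metric.ball c 1
      ⊆ Metric.ball (0:E2) 1 \ Metric.ball c' (1 - Υ/2) :=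
    fun x hx => ⟨hx.1, fun hc => hx.2 (hsub hc).2⟩
  have hsub' : Metric.ball c' (1 - Υ/2) ⊆ Metric.ball (0:E2) 1 :=
    fun x hx => (hsub hx).1
  have hvol : volume (Metric.ball (0:E2) 1 \ Metric.ball c' (1 - Υ/2))
      = ENNReal.ofReal π - ENNReal.ofReal (π * (1 - Υ/2)^2) := by
    rw [measure_diff hsub' measurableSet_ball.nullMeasurableSet
      (measure_ball_lt_top).ne]
    rw [SDL2.vol_ball2 _ _ hr, SDL2.vol_ball2 0 1 zero_le_one]
    norm_num
  calc (volume (Metric.ball (0:E2) 1 \ Metric.ball c 1)).toReal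
      ≤ (volume (Metric.ball (0:E2) 1 \ Metric.ball c' (1 - Υ/2))).toReal := by
        apply ENNReal.toReal_mono
        · rw [hvol]; exact (tsub_le_self.trans_lt ENNReal.ofReal_lt_top).ne
        · exact measure_mono hmono
  _ = π - π * (1 - Υ/2)^2 := by
        rw [hvol, ENNReal.toReal_sub_of_le (ENNReal.ofReal_le_ofReal
            (by nlinarith [mul_nonneg pi_nonneg (mul_nonneg h0.le h0.le), mul_pos pi_pos h0]))
          ENNReal.ofReal_ne_top, ENNReal.toReal_ofReal pi_nonneg,
          ENNReal.toReal_ofReal (by positivity)]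
  _ ≤ π * Υ := by nlinarith [mul_nonneg pi_nonneg (mul_nonneg h0.le h0.le)]

lemma SDL2.measurable_uSol : Measurable uSol := by
  unfold uSol
  exact Measurable.ite (isOpen_lt continuous_norm continuous_const).measurableSet
    (by fun_prop) measurable_const

lemma SDL2.measurable_urSol (Υ : ℝ) : Measurable (urSol Υ) := by
  unfold urSol
  have hcont : Continuous fun x : E2 => ‖x - ctr Υ‖ :=
    (continuous_id.sub continuous_const).norm
  exact Measurable.ite (isOpen_lt hcont continuous_const).measurableSet
    (by fun_prop) measurable_const

lemma SDL2.abs_uSol_le (x : E2) : |uSol x| ≤ 1 := by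
  unfold uSol
  split
  · rw [abs_le]
    constructor <;> nlinarith [norm_nonneg x, sq_nonneg ‖x‖]
  · simp

lemma SDL2.abs_urSol_le (Υ : ℝ) (x : E2) : |urSol Υ x| ≤ 1 := by
  unfold urSol
  split
  · rw [abs_le]
    constructor <;> nlinarith [norm_nonneg (x - ctr Υ), sq_nonneg ‖x - ctr Υ‖]
  · simp

end Aux

set_option maxHeartbeats 1000000 in
/-- Sharpness of the order `Υ` in the L²-estimate of Lemma 2:
the shifted-disc example of Remark 4, `‖u−u_r‖_Ω = √π·Υ + O(Υ³)`. -/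
theorem shifted_disc_L2_sharpness :
    ∃ C : ℝ, 0 < C ∧ ∀ Υ ∈ Ioo (0:ℝ) 1,
      |(∫ x in Metric.ball (0 : EuclideanSpace ℝ (Fin 2)) 1,
          (uSol x - urSol Υ x)^2) - π * Υ^2| ≤ C * Υ^3 := by
  refine ⟨10*π, by positivity, ?_⟩
  intro Υ hΥ
  obtain ⟨hΥ0, hΥ1⟩ := hΥ
  set B := Metric.ball (0 : EuclideanSpace ℝ (Fin 2)) 1 with hB
  set g : EuclideanSpace ℝ (Fin 2) → ℝ := fun x => Υ^2 - 2*Υ*(x 0) with hg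
  set h : EuclideanSpace ℝ (Fin 2) → ℝ := fun x => (uSol x - urSol Υ x)^2 with hh
  set L := B \ Metric.ball (ctr Υ) 1 with hL
  have hLmeas : MeasurableSet L := measurableSet_ball.diff measurableSet_ball
  -- pointwise estimate
  have hpt : ∀ x ∈ B, |h x - (g x)^2| ≤ L.indicator (fun _ => 9*Υ^2) x := by
    intro x hx
    have hx1 : ‖x‖ < 1 := by simpa [hB, mem_ball_zero_iff] using hx
    have hu : uSol x = 1 - ‖x‖^2 := if_pos hx1
    have hx0 : |x 0| ≤ 1 := (SDL2.abs_apply_le x 0).trans hx1.le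
    by_cases hxc : ‖x - ctr Υ‖ < 1
    · have hur : urSol Υ x = 1 - ‖x - ctr Υ‖^2 := if_pos hxc
      have : h x = (g x)^2 := by
        show (uSol x - urSol Υ x)^2 = (Υ^2 - 2*Υ*(x 0))^2
        rw [hu, hur]
        rw [show (1 - ‖x‖ ^ 2 - (1 - ‖x - ctr Υ‖ ^ 2)) = ‖x - ctr Υ‖^2 - ‖x‖^2 by ring,
          SDL2.norm_sub_ctr_sq]
        ring
      have hnotL : x ∉ L := fun hxL => hxL.2 (by rwa [Metric.mem_ball, dist_eq_norm])
      rw [this, indicator_of_notMem hnotL]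
      simp
    · have hur : urSol Υ x = 0 := if_neg hxc
      have hxL : x ∈ L := ⟨hx, fun hc => hxc (by rwa [Metric.mem_ball, dist_eq_norm] at hc)⟩
      rw [indicator_of_mem hxL]
      have hd0 : (0:ℝ) ≤ 1 - ‖x‖^2 := by nlinarith [norm_nonneg x]
      have hge1 : (1:ℝ) ≤ ‖x - ctr Υ‖^2 := by
        have := not_lt.mp hxc
        nlinarith [norm_nonneg (x - ctr Υ)]
      have hdg : 1 - ‖x‖^2 ≤ g x := by
        show 1 - ‖x‖^2 ≤ Υ^2 - 2*Υ*(x 0)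
        have := SDL2.norm_sub_ctr_sq Υ x
        nlinarith
      have hgub : g x ≤ 3*Υ := by
        show Υ^2 - 2*Υ*(x 0) ≤ 3*Υ
        have := abs_le.mp hx0
        nlinarith
      have hhx : h x = (1 - ‖x‖^2)^2 := by
        show (uSol x - urSol Υ x)^2 = (1 - ‖x‖^2)^2
        rw [hu, hur]; ring
      have hgge : 0 ≤ g x := le_trans hd0 hdg
      have hgx2 : (g x)^2 ≤ 9*Υ^2 := by nlinarith
      have hhx2 : h x ≤ (g x)^2 := by rw [hhx]; nlinarith
      have hhx0 : 0 ≤ h x := by rw [hhx]; positivity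
      rw [abs_le]
      constructor <;> nlinarith
  -- integrability
  have hInt_h : IntegrableOn h B := by
    apply SDL2.integrableOn_ball (f := h) ?_ 4
    · intro x _
      show |(uSol x - urSol Υ x)^2| ≤ 4
      have h1 := abs_le.mp (SDL2.abs_uSol_le x)
      have h2 := abs_le.mp (SDL2.abs_urSol_le Υ x)
      rw [abs_le]
      constructor <;> nlinarith [h1.1, h1.2, h2.1, h2.2]
    · exact ((SDL2.measurable_uSol.sub (SDL2.measurable_urSol Υ)).pow_const 2)
  have hInt_g2 : IntegrableOn (fun x => (g x)^2) B := by
    apply SDL2.integrableOn_ball (f := fun x => (g x)^2) ?_ 9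
    · intro x hx
      show |(Υ^2 - 2*Υ*(x 0))^2| ≤ 9
      have hx1 : ‖x‖ < 1 := by simpa [hB, mem_ball_zero_iff] using hx
      have hx0 := abs_le.mp ((SDL2.abs_apply_le x 0).trans hx1.le)
      have h3 : Υ^2 - 2*Υ*(x 0) ≤ 3 := by
        nlinarith [mul_nonneg hΥ0.le (by linarith [hx0.1] : (0:ℝ) ≤ x 0 + 1)]
      have h4 : -3 ≤ Υ^2 - 2*Υ*(x 0) := by
        nlinarith [mul_nonneg hΥ0.le (by linarith [hx0.2] : (0:ℝ) ≤ 1 - x 0)]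
      rw [abs_le]
      constructor <;> nlinarith
    · have hm : Measurable (fun x : EuclideanSpace ℝ (Fin 2) => x 0) :=
        (measurable_pi_apply 0).comp (WithLp.measurable_ofLp 2 _)
      exact ((measurable_const.sub (hm.const_mul (2*Υ))).pow_const 2)
  have hInt_ind : IntegrableOn (L.indicator (fun _ => 9*Υ^2)) B := by
    apply SDL2.integrableOn_ball (measurable_const.indicator hLmeas) (9*Υ^2)
    intro x _
    by_cases hxL : x ∈ L
    · rw [indicator_of_mem hxL, abs_of_nonneg (by positivity)]
    · rw [indicator_of_notMem hxL]
      simp; positivity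
  -- the main term
  have hmain : ∫ x in B, (g x)^2 = π*Υ^2 + π*Υ^4 := by
    simpa [hg] using SDL2.integral_main Υ
  -- the error estimate
  have hInt1 : IntegrableOn (fun x => |h x - (g x)^2|) B := (hInt_h.sub hInt_g2).abs
  have herr : |(∫ x in B, h x) - ∫ x in B, (g x)^2| ≤ 9*π*Υ^3 := by
    rw [← integral_sub hInt_h hInt_g2]
    calc |∫ x in B, (h x - (g x)^2)| ≤ ∫ x in B, |h x - (g x)^2| := by
          simpa [Real.norm_eq_abs] using
            norm_integral_le_integral_norm (μ := volume.restrict B)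
              (fun x => h x - (g x)^2)
    _ ≤ ∫ x in B, L.indicator (fun _ => 9*Υ^2) x :=
          setIntegral_mono_on hInt1 hInt_ind measurableSet_ball hpt
    _ = (volume L).toReal * (9*Υ^2) := by
          rw [setIntegral_indicator hLmeas,
            inter_eq_self_of_subset_right (diff_subset : L ⊆ B),
            setIntegral_const, smul_eq_mul, measureReal_def]
    _ ≤ (π * Υ) * (9*Υ^2) := by
          have := SDL2.lune_vol Υ ⟨hΥ0, hΥ1⟩
          apply mul_le_mul_of_nonneg_right _ (by positivity)
          simpa [hL, hB] using this
    _ = 9*π*Υ^3 := by ring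
  have hΥ43 : Υ^4 ≤ Υ^3 := pow_le_pow_of_le_one hΥ0.le hΥ1.le (by norm_num)
  calc |(∫ x in B, h x) - π * Υ^2|
      = |((∫ x in B, h x) - ∫ x in B, (g x)^2) + π*Υ^4| := by
        rw [hmain]; congr 1; ring
  _ ≤ |(∫ x in B, h x) - ∫ x in B, (g x)^2| + |π*Υ^4| := abs_add_le _ _
  _ ≤ 9*π*Υ^3 + π*Υ^4 := by
        have : |π*Υ^4| = π*Υ^4 := abs_of_nonneg (by positivity)
        rw [this]; linarith
  _ ≤ 10*π*Υ^3 := by nlinarith [pi_pos]
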